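/- Lemma 2: For a linear functional index coding problem (all Has- and Want-functions of all N receivers are F_q-linear, with matrices M_{H_i}, M_{W_i}), the confusion graph of the problem is the Cayley graph of the additive group (F_q^{nK}, +) with connection set S = ∪_{i∈[N]} S_i, where S_i = {s ∈ F_q^{nK} : sM_{H_i} = 0 and sM_{W_i} ≠ 0}. Consequently the confusion graph is vertex-transitive and regular. -/
import Mathlib


open Matrix

/-- Lemma 2: for a linear FICP the confusion graph is the Cayley graph of `(F_q^{nK}, +)` with
connection set `⋃ i, S_i`, hence vertex-transitive and regular. -/
theorem stmt_8 {F : Type*} [Field F] [Fintype F]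
    (n K N : ℕ) (hc wc : Fin N → ℕ)
    (MH : ∀ i, Matrix (Fin (n * K)) (Fin (hc i)) F)
    (MW : ∀ i, Matrix (Fin (n * K)) (Fin (wc i)) F)
    (G : SimpleGraph (Fin (n * K) → F))
    (hG : ∀ x x', G.Adj x x' ↔
      x ≠ x' ∧ ∃ i, x ᵥ* MH i = x' ᵥ* MH i ∧ x ᵥ* MW i ≠ x' ᵥ* MW i) :
    (∀ x x', G.Adj x x' ↔
      x - x' ∈ ⋃ i, {s : Fin (n * K) → F | s ᵥ* MH i = 0 ∧ s ᵥ* MW i ≠ 0})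
    ∧ (∀ x y : Fin (n * K) → F, ∃ φ : G ≃g G, φ x = y)
    ∧ (∃ d : ℕ, ∀ v : Fin (n * K) → F, (G.neighborSet v).ncard = d) := by
  have cayley : ∀ x x', G.Adj x x' ↔
      x - x' ∈ ⋃ i, {s : Fin (n * K) → F | s ᵥ* MH i = 0 ∧ s ᵥ* MW i ≠ 0} := by
    intro x x'
    rw [hG]
    simp only [Set.mem_iUnion, Set.mem_setOf_eq, sub_vecMul, sub_eq_zero, sub_ne_zero]
    constructor
    · rintro ⟨_, i, h1, h2⟩; exact ⟨i, h1, h2⟩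
    · rintro ⟨i, h1, h2⟩
      refine ⟨fun h => h2 (by rw [h]), i, h1, h2⟩
  refine ⟨cayley, ?_, ?_⟩
  · -- vertex-transitivity via translations
    intro x y
    refine ⟨⟨Equiv.addRight (y - x), ?_⟩, by change x + (y - x) = y; abel⟩
    intro a b
    simp only [Equiv.coe_addRight]
    rw [cayley, cayley]
    have : a + (y - x) - (b + (y - x)) = a - b := by ring
    rw [this]
  · -- regularity
    refine ⟨(G.neighborSet 0).ncard, fun v => ?_⟩
    have trans : ∀ x y : Fin (n * K) → F, ∃ φ : G ≃g G, φ x = y := by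
      intro x y
      refine ⟨⟨Equiv.addRight (y - x), ?_⟩, by change x + (y - x) = y; abel⟩
      intro a b
      simp only [Equiv.coe_addRight]
      rw [cayley, cayley]
      have : a + (y - x) - (b + (y - x)) = a - b := by ring
      rw [this]
    obtain ⟨φ, hφ⟩ := trans 0 v
    have := Nat.card_congr (φ.mapNeighborSet 0)
    rw [hφ] at this
    rw [← Nat.card_coe_set_eq, ← this, Nat.card_coe_set_eq]
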